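/- arXiv:1001.2076 — 2 statements merged into one kernel-verified Lean document; each statement's English description precedes it below -/
import Mathlib

section
/- Construction A preserves group decodability: let l ∈ {0,1,2} and let S₁,...,S_g ⊆ F₂ ⊕ F₄^m be disjoint nonempty sets with wt(y+z) odd whenever y ∈ S_i, z ∈ S_j, i ≠ j. Define S̃_i = { [y,0] : y ∈ S_i } ∪ { [y,ω^l] + δ : y ∈ S_i } ⊆ F₂ ⊕ F₄^{m+1}, where [y,ξ] appends ξ ∈ F₄ as a last coordinate and δ = [1,0,...,0]. Then the S̃_i are pairwise disjoint, each |S̃_i| = 2|S_i|, and wt(y+z) is odd whenever y ∈ S̃_i, z ∈ S̃_j, i ≠ j. Moreover, if wt(y+z) is even for all y, z ∈ S_i, then wt(y+z) is even for all y, z ∈ S̃_i. -/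
def add4 : Fin 4 → Fin 4 → Fin 4 :=
  ![![0, 1, 2, 3], ![1, 0, 3, 2], ![2, 3, 0, 1], ![3, 2, 1, 0]]

def addV {m : ℕ} (p q : ZMod 2 × (Fin m → Fin 4)) : ZMod 2 × (Fin m → Fin 4) :=
  (p.1 + q.1, fun k => add4 (p.2 k) (q.2 k))

def wtV {m : ℕ} (p : ZMod 2 × (Fin m → Fin 4)) : ℕ :=
  (if p.1 ≠ 0 then 1 else 0) + (Finset.univ.filter fun k => p.2 k ≠ 0).card

/-- Append an extra F₄-coordinate: [y, ξ]. -/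
def app {m : ℕ} (y : ZMod 2 × (Fin m → Fin 4)) (ξ : Fin 4) :
    ZMod 2 × (Fin (m + 1) → Fin 4) :=
  (y.1, Fin.snoc y.2 ξ)

/-- δ = [1, 0, …, 0]. -/
def deltaV (m : ℕ) : ZMod 2 × (Fin m → Fin 4) := ((1 : ZMod 2), fun _ => 0)

lemma add4_zero_right : ∀ a, add4 a 0 = a := by decide
lemma add4_zero_left : ∀ a, add4 0 a = a := by decide
lemma add4_self : ∀ a, add4 a a = 0 := by decide
lemma zmod2_cases : ∀ x : ZMod 2, x = 0 ∨ x = 1 := by decide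
lemma zmod2_add_self : ∀ x : ZMod 2, x + x = 0 := by decide

lemma addV_app {m : ℕ} (y z : ZMod 2 × (Fin m → Fin 4)) (a b : Fin 4) :
    addV (app y a) (app z b) = app (addV y z) (add4 a b) := by
  unfold addV app
  refine Prod.ext rfl ?_
  funext k
  refine Fin.lastCases ?_ ?_ k <;> simp

lemma wtV_app {m : ℕ} (p : ZMod 2 × (Fin m → Fin 4)) (c : Fin 4) :
    wtV (app p c) = wtV p + (if c ≠ 0 then 1 else 0) := by
  unfold wtV app
  simp only [Finset.card_filter]
  rw [Fin.sum_univ_castSucc]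
  simp [add_assoc]

lemma deltaV_succ (m : ℕ) : deltaV (m + 1) = app (deltaV m) 0 := by
  unfold deltaV app
  refine Prod.ext rfl ?_
  funext k
  refine Fin.lastCases ?_ ?_ k <;> simp

lemma addV_delta {m : ℕ} (y : ZMod 2 × (Fin m → Fin 4)) :
    addV y (deltaV m) = (y.1 + 1, y.2) := by
  unfold addV deltaV
  refine Prod.ext rfl ?_
  funext k
  simp [add4_zero_right]

lemma B_eq {m : ℕ} (y : ZMod 2 × (Fin m → Fin 4)) (ξ : Fin 4) :
    addV (app y ξ) (deltaV (m + 1)) = app (y.1 + 1, y.2) ξ := by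
  rw [deltaV_succ, addV_app, add4_zero_right, addV_delta]

lemma addV_flip_right {m : ℕ} (p q : ZMod 2 × (Fin m → Fin 4)) :
    addV p (q.1 + 1, q.2) = ((addV p q).1 + 1, (addV p q).2) := by
  unfold addV
  refine Prod.ext ?_ rfl
  simp [add_assoc]

lemma addV_flip_left {m : ℕ} (p q : ZMod 2 × (Fin m → Fin 4)) :
    addV (p.1 + 1, p.2) q = ((addV p q).1 + 1, (addV p q).2) := by
  unfold addV
  refine Prod.ext ?_ rfl
  simp [add_right_comm]

lemma addV_flip_both {m : ℕ} (p q : ZMod 2 × (Fin m → Fin 4)) :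
    addV (p.1 + 1, p.2) (q.1 + 1, q.2) = addV p q := by
  rw [addV_flip_left, addV_flip_right]
  refine Prod.ext ?_ rfl
  simp [add_assoc, zmod2_add_self]

lemma wtV_flip {m : ℕ} (p : ZMod 2 × (Fin m → Fin 4)) :
    wtV (p.1 + 1, p.2) % 2 = (wtV p + 1) % 2 := by
  have h11 : (1 : ZMod 2) + 1 = 0 := rfl
  unfold wtV
  rcases zmod2_cases p.1 with h | h <;> simp [h, h11] <;> omega

lemma app_inj {m : ℕ} (c : Fin 4) :
    Function.Injective (fun y : ZMod 2 × (Fin m → Fin 4) => app y c) := by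
  intro y z h
  simp only [app, Prod.mk.injEq] at h
  obtain ⟨h1, h2⟩ := h
  refine Prod.ext h1 ?_
  funext k
  have := congrFun h2 k.castSucc
  simpa using this

/-- Construction A: S̃ᵢ = {[y,0] : y ∈ Sᵢ} ∪ {[y,ω^l] + δ : y ∈ Sᵢ}.
The nonzero element ω^l (l ∈ {0,1,2}) of F₄ is given as `ξ ≠ 0`. -/
theorem constructionA (m g : ℕ) (ξ : Fin 4) (hξ : ξ ≠ 0)
    (S : Fin g → Finset (ZMod 2 × (Fin m → Fin 4)))
    (hne : ∀ i, (S i).Nonempty)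
    (hdisj : ∀ i j, i ≠ j → Disjoint (S i) (S j))
    (hodd : ∀ i j, i ≠ j → ∀ y ∈ S i, ∀ z ∈ S j, Odd (wtV (addV y z))) :
    let T : Fin g → Finset (ZMod 2 × (Fin (m + 1) → Fin 4)) :=
      fun i => (S i).image (fun y => app y 0) ∪
        (S i).image (fun y => addV (app y ξ) (deltaV (m + 1)))
    (∀ i j, i ≠ j → Disjoint (T i) (T j)) ∧
    (∀ i, (T i).card = 2 * (S i).card) ∧
    (∀ i j, i ≠ j → ∀ y ∈ T i, ∀ z ∈ T j, Odd (wtV (addV y z))) ∧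
    (∀ i, (∀ y ∈ S i, ∀ z ∈ S i, Even (wtV (addV y z))) →
      ∀ y ∈ T i, ∀ z ∈ T i, Even (wtV (addV y z))) := by
  intro T
  have hmemT : ∀ i Y, Y ∈ T i ↔ ∃ y ∈ S i, Y = app y 0 ∨ Y = app (y.1 + 1, y.2) ξ := by
    intro i Y
    simp only [T, Finset.mem_union, Finset.mem_image, B_eq]
    constructor
    · rintro (⟨y, hy, rfl⟩ | ⟨y, hy, rfl⟩)
      · exact ⟨y, hy, Or.inl rfl⟩
      · exact ⟨y, hy, Or.inr rfl⟩
    · rintro ⟨y, hy, rfl | rfl⟩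
      · exact Or.inl ⟨y, hy, rfl⟩
      · exact Or.inr ⟨y, hy, rfl⟩
  have key : ∀ (y z : ZMod 2 × (Fin m → Fin 4)) (Y Z : ZMod 2 × (Fin (m + 1) → Fin 4)),
      (Y = app y 0 ∨ Y = app (y.1 + 1, y.2) ξ) →
      (Z = app z 0 ∨ Z = app (z.1 + 1, z.2) ξ) →
      wtV (addV Y Z) % 2 = wtV (addV y z) % 2 := by
    intro y z Y Z hY hZ
    rcases hY with rfl | rfl <;> rcases hZ with rfl | rfl
    · rw [addV_app, wtV_app]; simp [add4_zero_left]
    · rw [addV_app, add4_zero_left, addV_flip_right, wtV_app, if_pos hξ]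
      have := wtV_flip (addV y z)
      omega
    · rw [addV_app, add4_zero_right, addV_flip_left, wtV_app, if_pos hξ]
      have := wtV_flip (addV y z)
      omega
    · rw [addV_app, add4_self, addV_flip_both, wtV_app]; simp
  have claim3 : ∀ i j, i ≠ j → ∀ Y ∈ T i, ∀ Z ∈ T j, Odd (wtV (addV Y Z)) := by
    intro i j hij Y hY Z hZ
    obtain ⟨y, hy, hYc⟩ := (hmemT i Y).1 hY
    obtain ⟨z, hz, hZc⟩ := (hmemT j Z).1 hZ
    have hk := key y z Y Z hYc hZc
    have ho := hodd i j hij y hy z hz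
    rw [Nat.odd_iff] at *
    omega
  refine ⟨?_, ?_, claim3, ?_⟩
  · intro i j hij
    rw [Finset.disjoint_left]
    intro Y hYi hYj
    have hO := claim3 i j hij Y hYi Y hYj
    have hYY : addV Y Y = (0, fun _ => 0) :=
      Prod.ext (zmod2_add_self _) (funext fun k => add4_self _)
    rw [hYY] at hO
    simp [wtV] at hO
  · intro i
    have hABdisj : Disjoint ((S i).image (fun y => app y 0))
        ((S i).image (fun y => addV (app y ξ) (deltaV (m + 1)))) := by
      rw [Finset.disjoint_left]
      rintro a ha hb
      obtain ⟨y, _, rfl⟩ := Finset.mem_image.1 ha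
      obtain ⟨z, _, hz⟩ := Finset.mem_image.1 hb
      rw [B_eq] at hz
      have := congrFun (congrArg Prod.snd hz) (Fin.last m)
      simp [app] at this
      exact hξ this
    have hBinj : Function.Injective
        (fun y : ZMod 2 × (Fin m → Fin 4) => addV (app y ξ) (deltaV (m + 1))) := by
      intro y z h
      simp only [B_eq] at h
      have h2 := app_inj ξ h
      rw [Prod.mk.injEq] at h2
      exact Prod.ext (by have := h2.1; exact add_right_cancel this) h2.2
    show (((S i).image _) ∪ ((S i).image _)).card = 2 * (S i).card
    rw [Finset.card_union_of_disjoint hABdisj,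
      Finset.card_image_of_injective _ (app_inj 0),
      Finset.card_image_of_injective _ hBinj]
    ring
  · intro i hEv Y hY Z hZ
    obtain ⟨y, hy, hYc⟩ := (hmemT i Y).1 hY
    obtain ⟨z, hz, hZc⟩ := (hmemT i Z).1 hZ
    have hk := key y z Y Z hYc hZc
    have he := hEv y hy z hz
    rw [Nat.even_iff] at *
    omega
end

section
/- Construction C: let S₁, S₂ ⊆ F₂ ⊕ F₄^m be disjoint sets such that wt(y+z) is odd for y ∈ S₁, z ∈ S₂, and wt(y+z) is even for y, z in the same S_i. Let ξ₁,ξ₂,ξ₃,ξ₄ be the four distinct elements of F₄ and δ = [1,0,...,0] ∈ F₂ ⊕ F₄^{m+1}. Define S̃₁ = {[y,ξ₁] : y ∈ S₁}, S̃₂ = {[y,ξ₂] : y ∈ S₁}, S̃₃ = {[y,ξ₃]+δ : y ∈ S₂}, S̃₄ = {[y,ξ₄]+δ : y ∈ S₂}. Then the S̃_i are pairwise disjoint and wt(y+z) is odd whenever y ∈ S̃_i, z ∈ S̃_j with i ≠ j. -/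
lemma add4_comm (a b : Fin 4) : add4 a b = add4 b a := by revert a b; decide
lemma add4_zero (a : Fin 4) : add4 a 0 = a := by revert a; decide
lemma add4_ne_zero {a b : Fin 4} (h : a ≠ b) : add4 a b ≠ 0 := by revert a b; decide

lemma addV_comm {m : ℕ} (p q : ZMod 2 × (Fin m → Fin 4)) : addV p q = addV q p := by
  unfold addV
  refine Prod.ext (add_comm _ _) ?_
  funext k; exact add4_comm _ _

lemma delta_app {m : ℕ} (y : ZMod 2 × (Fin m → Fin 4)) (a : Fin 4) :
    addV (app y a) (deltaV (m + 1)) = app (addV y (deltaV m)) a := by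
  unfold addV app deltaV
  refine Prod.ext rfl ?_
  funext k
  refine Fin.lastCases ?_ (fun i => ?_) k <;> simp [add4_zero]

lemma addV_delta_right {m : ℕ} (y z : ZMod 2 × (Fin m → Fin 4)) :
    addV y (addV z (deltaV m)) = ((addV y z).1 + 1, (addV y z).2) := by
  unfold addV deltaV
  refine Prod.ext (by simp [add_assoc]) ?_
  funext k; simp [add4_zero]

lemma addV_delta_delta {m : ℕ} (y z : ZMod 2 × (Fin m → Fin 4)) :
    addV (addV y (deltaV m)) (addV z (deltaV m)) = addV y z := by
  unfold addV deltaV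
  have h2 : ∀ a b : ZMod 2, a + 1 + (b + 1) = a + b := by decide
  refine Prod.ext (h2 _ _) ?_
  funext k; simp [add4_zero]

lemma wt_app {m : ℕ} (p : ZMod 2 × (Fin m → Fin 4)) (ξ : Fin 4) :
    wtV (app p ξ) = wtV p + (if ξ ≠ 0 then 1 else 0) := by
  unfold wtV app
  simp only [Finset.card_filter]
  rw [Fin.sum_univ_castSucc]
  simp only [Fin.snoc_castSucc, Fin.snoc_last]
  omega

lemma wt_flip {m : ℕ} (c : ZMod 2) (v : Fin m → Fin 4) :
    Even (wtV (c + 1, v)) ↔ Odd (wtV (c, v)) := by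
  have hc : c = 0 ∨ c = 1 := by revert c; decide
  unfold wtV
  rcases hc with rfl | rfl
  · norm_num
    rw [add_comm, Nat.even_add_one]
    exact Nat.not_even_iff_odd
  · norm_num
    rw [if_pos (by decide), zero_add]
    simp [Nat.odd_add]

lemma odd_case_plain {m : ℕ} {a b : ZMod 2 × (Fin m → Fin 4)} {ξa ξb : Fin 4} (h : ξa ≠ ξb)
    (hev : Even (wtV (addV a b))) : Odd (wtV (addV (app a ξa) (app b ξb))) := by
  rw [addV_app, wt_app, if_pos (add4_ne_zero h)]
  exact hev.add_one

lemma odd_case_mixed {m : ℕ} {a b : ZMod 2 × (Fin m → Fin 4)} {ξa ξb : Fin 4} (h : ξa ≠ ξb)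
    (hod : Odd (wtV (addV a b))) :
    Odd (wtV (addV (app a ξa) (addV (app b ξb) (deltaV (m + 1))))) := by
  rw [delta_app, addV_app, addV_delta_right, wt_app, if_pos (add4_ne_zero h)]
  exact ((wt_flip _ _).mpr hod).add_one

lemma odd_case_delta {m : ℕ} {a b : ZMod 2 × (Fin m → Fin 4)} {ξa ξb : Fin 4} (h : ξa ≠ ξb)
    (hev : Even (wtV (addV a b))) :
    Odd (wtV (addV (addV (app a ξa) (deltaV (m + 1))) (addV (app b ξb) (deltaV (m + 1))))) := by
  rw [delta_app, delta_app, addV_app, addV_delta_delta, wt_app, if_pos (add4_ne_zero h)]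
  exact hev.add_one


/-- Construction C: from a 2-group decodable design {S₁,S₂} build the 4-group
decodable design S̃₁ = {[y,ξ₁]}, S̃₂ = {[y,ξ₂]} (y ∈ S₁),
S̃₃ = {[y,ξ₃]+δ}, S̃₄ = {[y,ξ₄]+δ} (y ∈ S₂), with ξ₁,ξ₂,ξ₃,ξ₄ the four
distinct elements of F₄. -/
theorem constructionC (m : ℕ) (ξ : Fin 4 → Fin 4) (hξ : Function.Injective ξ)
    (S₁ S₂ : Set (ZMod 2 × (Fin m → Fin 4)))
    (hdisj : Disjoint S₁ S₂)
    (hodd : ∀ y ∈ S₁, ∀ z ∈ S₂, Odd (wtV (addV y z)))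
    (heven₁ : ∀ y ∈ S₁, ∀ z ∈ S₁, Even (wtV (addV y z)))
    (heven₂ : ∀ y ∈ S₂, ∀ z ∈ S₂, Even (wtV (addV y z))) :
    let T : Fin 4 → Set (ZMod 2 × (Fin (m + 1) → Fin 4)) :=
      ![(fun y => app y (ξ 0)) '' S₁,
        (fun y => app y (ξ 1)) '' S₁,
        (fun y => addV (app y (ξ 2)) (deltaV (m + 1))) '' S₂,
        (fun y => addV (app y (ξ 3)) (deltaV (m + 1))) '' S₂]
    (∀ i j, i ≠ j → Disjoint (T i) (T j)) ∧
    (∀ i j, i ≠ j → ∀ y ∈ T i, ∀ z ∈ T j, Odd (wtV (addV y z))) := by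
  intro T
  have hmem : ∀ i x, x ∈ T i → x.2 (Fin.last m) = ξ i := by
    intro i x hx
    fin_cases i <;>
      (obtain ⟨a, _, rfl⟩ := hx; simp [app, addV, deltaV, add4_zero])
  constructor
  · intro i j hij
    rw [Set.disjoint_left]
    intro x hxi hxj
    exact hij (hξ ((hmem i x hxi).symm.trans (hmem j x hxj)))
  · intro i j hij y hy z hz
    fin_cases i <;> fin_cases j
    · exact absurd rfl hij
    · obtain ⟨a, ha, rfl⟩ := hy
      obtain ⟨b, hb, rfl⟩ := hz
      exact odd_case_plain (hξ.ne (by decide)) (heven₁ a ha b hb)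
    · obtain ⟨a, ha, rfl⟩ := hy
      obtain ⟨b, hb, rfl⟩ := hz
      exact odd_case_mixed (hξ.ne (by decide)) (hodd a ha b hb)
    · obtain ⟨a, ha, rfl⟩ := hy
      obtain ⟨b, hb, rfl⟩ := hz
      exact odd_case_mixed (hξ.ne (by decide)) (hodd a ha b hb)
    · obtain ⟨a, ha, rfl⟩ := hy
      obtain ⟨b, hb, rfl⟩ := hz
      rw [addV_comm]; exact odd_case_plain (hξ.ne (by decide)) (heven₁ b hb a ha)
    · exact absurd rfl hij
    · obtain ⟨a, ha, rfl⟩ := hy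
      obtain ⟨b, hb, rfl⟩ := hz
      exact odd_case_mixed (hξ.ne (by decide)) (hodd a ha b hb)
    · obtain ⟨a, ha, rfl⟩ := hy
      obtain ⟨b, hb, rfl⟩ := hz
      exact odd_case_mixed (hξ.ne (by decide)) (hodd a ha b hb)
    · obtain ⟨a, ha, rfl⟩ := hy
      obtain ⟨b, hb, rfl⟩ := hz
      rw [addV_comm]; exact odd_case_mixed (hξ.ne (by decide)) (hodd b hb a ha)
    · obtain ⟨a, ha, rfl⟩ := hy
      obtain ⟨b, hb, rfl⟩ := hz
      rw [addV_comm]; exact odd_case_mixed (hξ.ne (by decide)) (hodd b hb a ha)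
    · exact absurd rfl hij
    · obtain ⟨a, ha, rfl⟩ := hy
      obtain ⟨b, hb, rfl⟩ := hz
      exact odd_case_delta (hξ.ne (by decide)) (heven₂ a ha b hb)
    · obtain ⟨a, ha, rfl⟩ := hy
      obtain ⟨b, hb, rfl⟩ := hz
      rw [addV_comm]; exact odd_case_mixed (hξ.ne (by decide)) (hodd b hb a ha)
    · obtain ⟨a, ha, rfl⟩ := hy
      obtain ⟨b, hb, rfl⟩ := hz
      rw [addV_comm]; exact odd_case_mixed (hξ.ne (by decide)) (hodd b hb a ha)
    · obtain ⟨a, ha, rfl⟩ := hy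
      obtain ⟨b, hb, rfl⟩ := hz
      rw [addV_comm]; exact odd_case_delta (hξ.ne (by decide)) (heven₂ b hb a ha)
    · exact absurd rfl hij
end
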